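/- There do not exist real numbers a_1, a_2, w_1, w_2, β_1, β_2 and points t_1 < t_2 < t_3 such that the function g(x) = a_1 σ(w_1 x + β_1) + a_2 σ(w_2 x + β_2) is differentiable at t_1, t_2, t_3 with g′(t_1) < 0, g′(t_2) > 0, and g′(t_3) < 0. In other words, no linear combination of two rectified linear units of a scalar input can have slope pattern negative, then positive, then negative. -/

import Mathlib

/-- The rectified linear unit `σ(x) = max(0, x)`. -/
noncomputable def relu (x : ℝ) : ℝ := max 0 x

/-- Right-sided slope of `x ↦ relu (w*x+β)` at `t`. -/
noncomputable def rslope (w β t : ℝ) : ℝ :=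
  if 0 < w * t + β then w else if w * t + β = 0 then max w 0 else 0

lemma relu_hasDerivWithinAt (w β t : ℝ) :
    HasDerivWithinAt (fun x => relu (w * x + β)) (rslope w β t) (Set.Ici t) t := by
  rcases lt_trichotomy (w * t + β) 0 with h | h | h
  · have hne : ∀ᶠ x in nhds t, relu (w * x + β) = 0 := by
      have hc : Continuous fun x : ℝ => w * x + β := by continuity
      have : ∀ᶠ x in nhds t, w * x + β < 0 := (hc.tendsto t).eventually (eventually_lt_nhds h)
      filter_upwards [this] with x hx
      simp [relu, max_eq_left hx.le]
    have h0 : relu (w * t + β) = 0 := by simp [relu, max_eq_left h.le]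
    have := (hasDerivAt_const t (0 : ℝ)).congr_of_eventuallyEq
      (by filter_upwards [hne] with x hx; exact hx)
    have hrs : rslope w β t = 0 := by simp [rslope, h.not_gt, h.ne]
    rw [hrs]
    exact this.hasDerivWithinAt
  · -- at the kink: on `Ici t`, the function equals `max w 0 * (x - t)`
    have hβ : β = -(w * t) := by linarith
    have hlin : HasDerivWithinAt (fun x : ℝ => max w 0 * (x - t)) (max w 0) (Set.Ici t) t := by
      simpa using (((hasDerivAt_id t).sub_const t).const_mul (max w 0)).hasDerivWithinAt
    have hrs : rslope w β t = max w 0 := by simp [rslope, h]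
    rw [hrs]
    refine hlin.congr (fun x hx => ?_) (by simp [relu, hβ])
    have hxt : (0:ℝ) ≤ x - t := sub_nonneg.mpr hx
    have hval : w * x + β = w * (x - t) := by rw [hβ]; ring
    rcases le_or_gt w 0 with hw | hw
    · have : w * (x - t) ≤ 0 := mul_nonpos_of_nonpos_of_nonneg hw hxt
      simp [relu, hval, max_eq_left this, max_eq_right hw]
    · have : 0 ≤ w * (x - t) := mul_nonneg hw.le hxt
      rw [relu, hval, max_eq_right this, max_eq_left hw.le]
  · have hne : ∀ᶠ x in nhds t, relu (w * x + β) = w * x + β := by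
      have hc : Continuous fun x : ℝ => w * x + β := by continuity
      have : ∀ᶠ x in nhds t, 0 < w * x + β := (hc.tendsto t).eventually (eventually_gt_nhds h)
      filter_upwards [this] with x hx
      simp [relu, max_eq_right hx.le]
    have hder : HasDerivAt (fun x : ℝ => w * x + β) w t := by
      simpa using ((hasDerivAt_id t).const_mul w).add_const β
    have := hder.congr_of_eventuallyEq hne
    have hrs : rslope w β t = w := by simp [rslope, h]
    rw [hrs]
    exact this.hasDerivWithinAt

lemma rslope_eq_of_nonneg {w : ℝ} (β x : ℝ) (hw : 0 ≤ w) :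
    rslope w β x = if 0 ≤ w * x + β then w else 0 := by
  unfold rslope
  rcases lt_trichotomy (w * x + β) 0 with h | h | h
  · rw [if_neg (not_lt.2 h.le), if_neg h.ne, if_neg (not_le.2 h)]
  · rw [if_neg (by simp [h]), if_pos h, if_pos (le_of_eq h.symm), max_eq_left hw]
  · rw [if_pos h, if_pos h.le]

lemma rslope_eq_of_neg {w : ℝ} (β x : ℝ) (hw : w < 0) :
    rslope w β x = if 0 < w * x + β then w else 0 := by
  unfold rslope
  split_ifs with h1 h2
  · rfl
  · exact max_eq_right hw.le
  · rfl

lemma rslope_mono (w β : ℝ) : Monotone (rslope w β) := by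
  intro s t hst
  rcases le_or_gt 0 w with hw | hw
  · have hm : w * s + β ≤ w * t + β := by nlinarith
    rw [rslope_eq_of_nonneg β s hw, rslope_eq_of_nonneg β t hw]
    split_ifs <;> linarith
  · have hm : w * t + β ≤ w * s + β := by nlinarith
    rw [rslope_eq_of_neg β s hw, rslope_eq_of_neg β t hw]
    split_ifs <;> linarith

lemma rslope_mem (w β t : ℝ) : rslope w β t = 0 ∨ rslope w β t = w := by
  unfold rslope
  split_ifs with h1 h2
  · exact Or.inr rfl
  · rcases le_or_gt w 0 with hw | hw
    · exact Or.inl (max_eq_right hw)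
    · exact Or.inr (max_eq_left hw.le)
  · exact Or.inl rfl

/-- the key combinatorial fact -/
lemma key_comb (x₁ x₂ x₃ y₁ y₂ y₃ c d : ℝ)
    (hx : (x₁ ≤ x₂ ∧ x₂ ≤ x₃) ∨ (x₃ ≤ x₂ ∧ x₂ ≤ x₁))
    (hy : (y₁ ≤ y₂ ∧ y₂ ≤ y₃) ∨ (y₃ ≤ y₂ ∧ y₂ ≤ y₁))
    (hx1 : x₁ = 0 ∨ x₁ = c) (hx2 : x₂ = 0 ∨ x₂ = c) (hx3 : x₃ = 0 ∨ x₃ = c)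
    (hy1 : y₁ = 0 ∨ y₁ = d) (hy2 : y₂ = 0 ∨ y₂ = d) (hy3 : y₃ = 0 ∨ y₃ = d)
    (h1 : x₁ + y₁ < 0) (h2 : 0 < x₂ + y₂) (h3 : x₃ + y₃ < 0) : False := by
  rcases hx1 with rfl | rfl <;> rcases hx2 with rfl | rfl <;> rcases hx3 with rfl | rfl <;>
    rcases hy1 with rfl | rfl <;> rcases hy2 with rfl | rfl <;> rcases hy3 with rfl | rfl <;>
    rcases hx with ⟨hxa, hxb⟩ | ⟨hxa, hxb⟩ <;> rcases hy with ⟨hya, hyb⟩ | ⟨hya, hyb⟩ <;>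
    linarith

/-- **Two ReLUs cannot produce a down-up-down slope pattern.** There are no coefficients
`a₁, a₂`, weights `w₁, w₂`, biases `β₁, β₂`, and points `t₁ < t₂ < t₃` such that
`g(x) = a₁ σ(w₁ x + β₁) + a₂ σ(w₂ x + β₂)` is differentiable at `t₁, t₂, t₃` with
`g′(t₁) < 0`, `g′(t₂) > 0`, and `g′(t₃) < 0`. -/
theorem no_down_up_down_with_two_relus :
    ¬ ∃ (a₁ a₂ w₁ w₂ β₁ β₂ t₁ t₂ t₃ : ℝ),
      t₁ < t₂ ∧ t₂ < t₃ ∧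
      (let g : ℝ → ℝ := fun x => a₁ * relu (w₁ * x + β₁) + a₂ * relu (w₂ * x + β₂)
       DifferentiableAt ℝ g t₁ ∧ DifferentiableAt ℝ g t₂ ∧ DifferentiableAt ℝ g t₃ ∧
       deriv g t₁ < 0 ∧ 0 < deriv g t₂ ∧ deriv g t₃ < 0) := by
  rintro ⟨a₁, a₂, w₁, w₂, β₁, β₂, t₁, t₂, t₃, h12, h23, hd1, hd2, hd3, hs1, hs2, hs3⟩
  set g : ℝ → ℝ := fun x => a₁ * relu (w₁ * x + β₁) + a₂ * relu (w₂ * x + β₂) with hg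
  have hderiv : ∀ t : ℝ, DifferentiableAt ℝ g t →
      deriv g t = a₁ * rslope w₁ β₁ t + a₂ * rslope w₂ β₂ t := by
    intro t hdt
    have h1 : HasDerivWithinAt g (a₁ * rslope w₁ β₁ t + a₂ * rslope w₂ β₂ t) (Set.Ici t) t :=
      ((relu_hasDerivWithinAt w₁ β₁ t).const_mul a₁).add
        ((relu_hasDerivWithinAt w₂ β₂ t).const_mul a₂)
    have h2 : HasDerivWithinAt g (deriv g t) (Set.Ici t) t := hdt.hasDerivAt.hasDerivWithinAt
    exact (uniqueDiffOn_Ici t t Set.self_mem_Ici).eq_deriv _ h2 h1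
  rw [hderiv t₁ hd1] at hs1
  rw [hderiv t₂ hd2] at hs2
  rw [hderiv t₃ hd3] at hs3
  have hmul_mem : ∀ (a w β t : ℝ), a * rslope w β t = 0 ∨ a * rslope w β t = a * w := by
    intro a w β t
    rcases rslope_mem w β t with h | h <;> simp [h]
  have hmono : ∀ (a w β : ℝ),
      (a * rslope w β t₁ ≤ a * rslope w β t₂ ∧ a * rslope w β t₂ ≤ a * rslope w β t₃) ∨
      (a * rslope w β t₃ ≤ a * rslope w β t₂ ∧ a * rslope w β t₂ ≤ a * rslope w β t₁) := by
    intro a w β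
    have m12 := rslope_mono w β h12.le
    have m23 := rslope_mono w β h23.le
    rcases le_or_gt 0 a with ha | ha
    · exact Or.inl ⟨mul_le_mul_of_nonneg_left m12 ha, mul_le_mul_of_nonneg_left m23 ha⟩
    · exact Or.inr ⟨mul_le_mul_of_nonpos_left m23 ha.le, mul_le_mul_of_nonpos_left m12 ha.le⟩
  exact key_comb _ _ _ _ _ _ (a₁ * w₁) (a₂ * w₂) (hmono a₁ w₁ β₁) (hmono a₂ w₂ β₂)
    (hmul_mem a₁ w₁ β₁ t₁) (hmul_mem a₁ w₁ β₁ t₂) (hmul_mem a₁ w₁ β₁ t₃)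
    (hmul_mem a₂ w₂ β₂ t₁) (hmul_mem a₂ w₂ β₂ t₂) (hmul_mem a₂ w₂ β₂ t₃)
    hs1 hs2 hs3
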